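/- Let T be a bijective piecewise translation (interval exchange) of a finite disjoint union of intervals X, and suppose T admits an induced first-return map on a subinterval G ⊆ X which is uniquely ergodic with unique invariant measure Lebesgue on G. If X = ⋃_{k=0}^{m} T^k(G) (so every point of X visits G), then any T-invariant probability measure on X is the normalized Lebesgue measure; hence T is uniquely ergodic. -/

import Mathlib

open MeasureTheory Filter Function Topology ENNReal

namespace UEAux

variable {α : Type*} [MeasurableSpace α]

def Cset (T : α → α) (G : Set α) (n : ℕ) : Set α := {x | ∀ j < n, T^[j] x ∉ G}

omit [MeasurableSpace α] in
lemma Cset_zero (T : α → α) (G : Set α) : Cset T G 0 = Set.univ := by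
  ext x; simp [Cset]

lemma measurableSet_Cset {T : α → α} (hT : Measurable T) {G : Set α}
    (hG : MeasurableSet G) (n : ℕ) : MeasurableSet (Cset T G n) := by
  have : Cset T G n = ⋂ j ∈ Finset.range n, (T^[j]) ⁻¹' Gᶜ := by
    ext x; simp [Cset]
  rw [this]
  exact Finset.measurableSet_biInter _ fun j _ => (hT.iterate j) hG.compl

omit [MeasurableSpace α] in
lemma mem_pre_Cset {T : α → α} {G : Set α} {n : ℕ} {x : α} :
    x ∈ T ⁻¹' (Cset T G n) ↔ ∀ j, 0 < j → j ≤ n → T^[j] x ∉ G := by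
  simp only [Set.mem_preimage, Cset, Set.mem_setOf_eq]
  constructor
  · intro h j hj0 hjn
    have := h (j-1) (by omega)
    rw [show j = j - 1 + 1 by omega, Function.iterate_succ_apply]
    exact this
  · intro h j hj
    have := h (j+1) (by omega) (by omega)
    rwa [Function.iterate_succ_apply] at this

omit [MeasurableSpace α] in
lemma compl_inter_pre {T : α → α} {G : Set α} (n : ℕ) :
    Gᶜ ∩ T ⁻¹' (Cset T G n) = Cset T G (n+1) := by
  ext x
  simp only [Set.mem_inter_iff, Set.mem_compl_iff, mem_pre_Cset]
  simp only [Cset, Set.mem_setOf_eq]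
  constructor
  · rintro ⟨h0, h⟩ j hj
    rcases Nat.eq_zero_or_pos j with rfl | hj0
    · simpa using h0
    · exact h j hj0 (by omega)
  · intro h
    refine ⟨by simpa using h 0 (by omega), fun j hj0 hjn => h j (by omega)⟩

omit [MeasurableSpace α] in
lemma antitone_Cset (T : α → α) (G : Set α) : Antitone (Cset T G) :=
  fun a b hab x hx j hj => hx j (by omega)

omit [MeasurableSpace α] in
lemma hits (T : α → α) (G : Set α) (m : ℕ)
    (hcover : (⋃ k ∈ Finset.range (m + 1), T^[k] '' G) = Set.univ)
    (rt : α → ℕ)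
    (hrt : ∀ x ∈ G, 1 ≤ rt x ∧ T^[rt x] x ∈ G ∧
        ∀ k, 0 < k → k < rt x → T^[k] x ∉ G) :
    ∀ x, ∃ j, T^[j] x ∈ G := by
  have key : ∀ (k : ℕ) (g : α), g ∈ G → ∃ t, k ≤ t ∧ T^[t] g ∈ G := by
    intro k
    induction k with
    | zero => exact fun g hg => ⟨0, le_refl _, by simpa using hg⟩
    | succ k ih =>
      intro g hg
      obtain ⟨t, hkt, ht⟩ := ih g hg
      refine ⟨t + rt (T^[t] g), ?_, ?_⟩
      · have := (hrt _ ht).1; omega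
      · rw [add_comm, Function.iterate_add_apply]
        exact (hrt _ ht).2.1
  intro x
  have hx : x ∈ ⋃ k ∈ Finset.range (m + 1), T^[k] '' G := by rw [hcover]; trivial
  simp only [Set.mem_iUnion, Set.mem_image] at hx
  obtain ⟨k, _, g, hg, hgx⟩ := hx
  obtain ⟨t, hkt, ht⟩ := key k g hg
  refine ⟨t - k, ?_⟩
  rw [← hgx, ← Function.iterate_add_apply, show t - k + k = t by omega]
  exact ht

omit [MeasurableSpace α] in
lemma iInter_Cset (T : α → α) (G : Set α)
    (h : ∀ x, ∃ j, T^[j] x ∈ G) : ⋂ n, Cset T G n = ∅ := by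
  ext x
  simp only [Set.mem_iInter, Set.mem_empty_iff_false, iff_false]
  intro hx
  obtain ⟨j, hj⟩ := h x
  exact hx (j+1) j (by omega) hj

section Invariant

variable {T : α → α} (hT : Measurable T) {G : Set α} (hG : MeasurableSet G)
  (μ : Measure α) [IsProbabilityMeasure μ] (hinv : μ.map T = μ)
  (hhits : ∀ x, ∃ j, T^[j] x ∈ G)

include hT hinv in
lemma pre_meas {A : Set α} (hA : MeasurableSet A) : μ (T ⁻¹' A) = μ A := by
  conv_rhs => rw [← hinv]
  rw [Measure.map_apply hT hA]

include hT hG hhits in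
lemma tendsto_Cset : Tendsto (fun n => μ (Cset T G n)) atTop (𝓝 0) := by
  have h := tendsto_measure_iInter_atTop (μ := μ)
    (fun n => (measurableSet_Cset hT hG n).nullMeasurableSet)
    (antitone_Cset T G) ⟨0, measure_ne_top _ _⟩
  rw [iInter_Cset T G hhits] at h
  simpa [Function.comp_def] using h

include hT hG hinv hhits in
/-- Kac-type reconstruction: decompose `μ A` by the last visit to `G`. -/
lemma key_sum {A : Set α} (hA : MeasurableSet A) :
    μ A = ∑' k, μ (G ∩ T ⁻¹' (Cset T G k) ∩ (T^[k]) ⁻¹' A) := by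
  set t : ℕ → ℝ≥0∞ := fun k => μ (G ∩ T ⁻¹' (Cset T G k) ∩ (T^[k]) ⁻¹' A) with ht
  have measA : ∀ n : ℕ, MeasurableSet ((T^[n]) ⁻¹' A) := fun n => (hT.iterate n) hA
  have measC : ∀ n : ℕ, MeasurableSet (T ⁻¹' (Cset T G n)) :=
    fun n => hT (measurableSet_Cset hT hG n)
  have main : ∀ n, μ A = (∑ k ∈ Finset.range n, t k)
      + μ ((T^[n]) ⁻¹' A ∩ T ⁻¹' (Cset T G n)) := by
    intro n
    induction n with
    | zero =>
      simp [Cset_zero]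
    | succ n ihn =>
      rw [ihn, Finset.sum_range_succ]
      have split : μ ((T^[n]) ⁻¹' A ∩ T ⁻¹' (Cset T G n))
          = t n + μ ((T^[n+1]) ⁻¹' A ∩ T ⁻¹' (Cset T G (n+1))) := by
        set S := (T^[n]) ⁻¹' A ∩ T ⁻¹' (Cset T G n) with hS
        have h1 : μ (S ∩ G) + μ (S \ G) = μ S := measure_inter_add_diff S hG
        have h2 : S ∩ G = G ∩ T ⁻¹' (Cset T G n) ∩ (T^[n]) ⁻¹' A := by
          rw [hS]; ext x; simp [Set.mem_inter_iff]; tauto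
        have h3 : S \ G = (T^[n]) ⁻¹' A ∩ Cset T G (n+1) := by
          rw [hS, Set.diff_eq, ← compl_inter_pre n]; ext x
          simp [Set.mem_inter_iff]; tauto
        have h4 : μ ((T^[n]) ⁻¹' A ∩ Cset T G (n+1))
            = μ ((T^[n+1]) ⁻¹' A ∩ T ⁻¹' (Cset T G (n+1))) := by
          rw [← pre_meas hT μ hinv ((measA n).inter (measurableSet_Cset hT hG (n+1)))]
          have heq : T ⁻¹' ((T^[n]) ⁻¹' A ∩ Cset T G (n+1))
              = (T^[n+1]) ⁻¹' A ∩ T ⁻¹' (Cset T G (n+1)) := by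
            ext x; simp [Set.mem_preimage, Function.iterate_succ_apply]
          rw [heq]
        rw [← h1, h2, h3, h4, ht]
      rw [split, ← add_assoc]
  have h1 : Tendsto (fun n => ∑ k ∈ Finset.range n, t k) atTop (𝓝 (∑' k, t k)) :=
    ENNReal.tendsto_nat_tsum t
  have h2 : Tendsto (fun n => μ ((T^[n]) ⁻¹' A ∩ T ⁻¹' (Cset T G n))) atTop (𝓝 0) := by
    have hb : ∀ n, μ ((T^[n]) ⁻¹' A ∩ T ⁻¹' (Cset T G n)) ≤ μ (Cset T G n) := by
      intro n
      calc μ ((T^[n]) ⁻¹' A ∩ T ⁻¹' (Cset T G n)) ≤ μ (T ⁻¹' (Cset T G n)) :=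
            measure_mono Set.inter_subset_right
        _ = μ (Cset T G n) := pre_meas hT μ hinv (measurableSet_Cset hT hG n)
    exact tendsto_of_tendsto_of_tendsto_of_le_of_le tendsto_const_nhds
      (tendsto_Cset hT hG μ hhits) (fun n => zero_le) hb
  have h3 : Tendsto (fun n => (∑ k ∈ Finset.range n, t k)
      + μ ((T^[n]) ⁻¹' A ∩ T ⁻¹' (Cset T G n))) atTop (𝓝 (∑' k, t k)) := by
    simpa using h1.add h2
  have h4 : Tendsto (fun _ : ℕ => μ A) atTop (𝓝 (∑' k, t k)) := by
    refine h3.congr fun n => (main n).symm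
  exact tendsto_nhds_unique tendsto_const_nhds h4

include hT hG hinv hhits in
/-- Kac-type reconstruction II: decompose by the first return to `G`, for `A ⊆ G`. -/
lemma key_sum2 {A : Set α} (hA : MeasurableSet A) (hAG : A ⊆ G) :
    μ A = ∑' k, μ ((G ∩ T ⁻¹' (Cset T G k) ∩ (T^[k+1]) ⁻¹' G) ∩ (T^[k+1]) ⁻¹' A) := by
  set t : ℕ → ℝ≥0∞ :=
    fun k => μ ((G ∩ T ⁻¹' (Cset T G k) ∩ (T^[k+1]) ⁻¹' G) ∩ (T^[k+1]) ⁻¹' A) with ht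
  have measA : ∀ n : ℕ, MeasurableSet ((T^[n]) ⁻¹' A) := fun n => (hT.iterate n) hA
  have main : ∀ n, μ A = (∑ k ∈ Finset.range n, t k)
      + μ ((T^[n]) ⁻¹' A ∩ Cset T G n) := by
    intro n
    induction n with
    | zero => simp [Cset_zero]
    | succ n ihn =>
      rw [ihn, Finset.sum_range_succ]
      have split : μ ((T^[n]) ⁻¹' A ∩ Cset T G n)
          = t n + μ ((T^[n+1]) ⁻¹' A ∩ Cset T G (n+1)) := by
        have step : μ ((T^[n]) ⁻¹' A ∩ Cset T G n)
            = μ ((T^[n+1]) ⁻¹' A ∩ T ⁻¹' (Cset T G n)) := by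
          rw [← pre_meas hT μ hinv ((measA n).inter (measurableSet_Cset hT hG n))]
          have heq : T ⁻¹' ((T^[n]) ⁻¹' A ∩ Cset T G n)
              = (T^[n+1]) ⁻¹' A ∩ T ⁻¹' (Cset T G n) := by
            ext x; simp [Set.mem_preimage, Function.iterate_succ_apply]
          rw [heq]
        set S := (T^[n+1]) ⁻¹' A ∩ T ⁻¹' (Cset T G n) with hS
        have h1 : μ (S ∩ G) + μ (S \ G) = μ S := measure_inter_add_diff S hG
        have h2 : S ∩ G = (G ∩ T ⁻¹' (Cset T G n) ∩ (T^[n+1]) ⁻¹' G) ∩ (T^[n+1]) ⁻¹' A := by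
          rw [hS]; ext x
          simp only [Set.mem_inter_iff, Set.mem_preimage]
          constructor
          · rintro ⟨⟨ha, hc⟩, hg⟩
            exact ⟨⟨⟨hg, hc⟩, hAG ha⟩, ha⟩
          · rintro ⟨⟨⟨hg, hc⟩, _⟩, ha⟩
            exact ⟨⟨ha, hc⟩, hg⟩
        have h3 : S \ G = (T^[n+1]) ⁻¹' A ∩ Cset T G (n+1) := by
          rw [hS, Set.diff_eq, ← compl_inter_pre n]; ext x
          simp [Set.mem_inter_iff]; tauto
        rw [step, ← h1, h2, h3, ht]
      rw [split, ← add_assoc]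
  have h1 : Tendsto (fun n => ∑ k ∈ Finset.range n, t k) atTop (𝓝 (∑' k, t k)) :=
    ENNReal.tendsto_nat_tsum t
  have h2 : Tendsto (fun n => μ ((T^[n]) ⁻¹' A ∩ Cset T G n)) atTop (𝓝 0) :=
    tendsto_of_tendsto_of_tendsto_of_le_of_le tendsto_const_nhds
      (tendsto_Cset hT hG μ hhits) (fun n => zero_le)
      (fun n => measure_mono Set.inter_subset_right)
  have h3 : Tendsto (fun n => (∑ k ∈ Finset.range n, t k)
      + μ ((T^[n]) ⁻¹' A ∩ Cset T G n)) atTop (𝓝 (∑' k, t k)) := by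
    simpa using h1.add h2
  exact tendsto_nhds_unique tendsto_const_nhds (h3.congr fun n => (main n).symm)

end Invariant

section Ret

open Classical in
noncomputable def gmap (T : α → α) (G : Set α)
    (htot : ∀ x, ∃ n, 0 < n ∧ T^[n] x ∈ G) : α → α :=
  fun x => T^[Nat.find (htot x)] x

variable {T : α → α} (hT : Measurable T) {G : Set α} (hG : MeasurableSet G)
  (htot : ∀ x, ∃ n, 0 < n ∧ T^[n] x ∈ G)

include hT hG in
lemma measurable_gmap : Measurable (gmap T G htot) := by
  classical
  apply Measurable.find (f := fun n x => T^[n] x) (fun n => hT.iterate n)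
  intro n
  match n with
  | 0 => simp
  | Nat.succ k =>
    have : {x | 0 < k + 1 ∧ T^[k+1] x ∈ G} = (T^[k+1]) ⁻¹' G := by
      ext x; simp
    rw [this]
    exact (hT.iterate (k+1)) hG

omit [MeasurableSpace α] in
lemma gmap_eq_rt (rt : α → ℕ)
    (hrt : ∀ x ∈ G, 1 ≤ rt x ∧ T^[rt x] x ∈ G ∧
        ∀ k, 0 < k → k < rt x → T^[k] x ∉ G)
    {x : α} (hx : x ∈ G) : gmap T G htot x = T^[rt x] x := by
  classical
  have hfind : Nat.find (htot x) = rt x := by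
    rw [Nat.find_eq_iff]
    refine ⟨⟨(hrt x hx).1, (hrt x hx).2.1⟩, fun j hj => ?_⟩
    rintro ⟨hj0, hjG⟩
    exact (hrt x hx).2.2 j hj0 hj hjG
  simp only [gmap]
  congr 1

variable (μ : Measure α) [IsProbabilityMeasure μ] (hinv : μ.map T = μ)
  (hhits : ∀ x, ∃ j, T^[j] x ∈ G)

include hT hG hinv hhits in
lemma gmap_measure_eq {A : Set α} (hA : MeasurableSet A) :
    μ ((gmap T G htot) ⁻¹' A ∩ G) = μ (A ∩ G) := by
  classical
  set U : ℕ → Set α :=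
    fun k => (G ∩ T ⁻¹' (Cset T G k) ∩ (T^[k+1]) ⁻¹' G) ∩ (T^[k+1]) ⁻¹' (A ∩ G) with hUdef
  have hU : (gmap T G htot) ⁻¹' A ∩ G = ⋃ k, U k := by
    ext x
    simp only [Set.mem_iUnion, Set.mem_inter_iff, Set.mem_preimage, hUdef]
    constructor
    · rintro ⟨hgx, hxG⟩
      have hspec := Nat.find_spec (htot x)
      set n := Nat.find (htot x) with hn
      refine ⟨n - 1, ⟨⟨hxG, ?_⟩, ?_⟩, ?_, ?_⟩
      · apply mem_pre_Cset.2
        intro j hj0 hjn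
        intro hjG
        exact Nat.find_min (htot x) (m := j) (by omega) ⟨hj0, hjG⟩
      · rw [show n - 1 + 1 = n by omega]; exact hspec.2
      · rw [show n - 1 + 1 = n by omega]; exact hgx
      · rw [show n - 1 + 1 = n by omega]; exact hspec.2
    · rintro ⟨k, ⟨⟨hxG, hc⟩, hgG⟩, hA', _⟩
      have hfind : Nat.find (htot x) = k + 1 := by
        rw [Nat.find_eq_iff]
        refine ⟨⟨Nat.succ_pos k, hgG⟩, fun j hj => ?_⟩
        rintro ⟨hj0, hjG⟩
        exact (mem_pre_Cset.1 hc j hj0 (by omega)) hjG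
      refine ⟨?_, hxG⟩
      show T^[Nat.find (htot x)] x ∈ A
      rw [hfind]; exact hA'
  have hmeasU : ∀ k, MeasurableSet (U k) := by
    intro k
    exact (((hG.inter (hT (measurableSet_Cset hT hG k))).inter
      ((hT.iterate (k+1)) hG)).inter ((hT.iterate (k+1)) (hA.inter hG)))
  have hdisj : Pairwise (Disjoint on U) := by
    have key : ∀ k l, k < l → Disjoint (U k) (U l) := by
      intro k l hkl
      rw [Set.disjoint_left]
      rintro x ⟨⟨_, hgG⟩, _⟩ ⟨⟨⟨_, hc⟩, _⟩, _⟩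
      exact (mem_pre_Cset.1 hc (k+1) (by omega) (by omega)) hgG
    intro k l hkl
    rcases lt_or_gt_of_ne hkl with h | h
    · exact key k l h
    · exact (key l k h).symm
  rw [hU, measure_iUnion hdisj hmeasU]
  exact (key_sum2 hT hG μ hinv hhits (hA.inter hG) Set.inter_subset_right).symm

end Ret

end UEAux

open MeasureTheory UEAux in
theorem unique_ergodicity_from_induced {α : Type*} [MeasurableSpace α]
    (T : α → α) (hT : Measurable T)
    (ν : Measure α) [IsProbabilityMeasure ν] (hinv : ν.map T = ν)
    (G : Set α) (hG : MeasurableSet G) (hνG : 0 < ν G)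
    (m : ℕ) (hcover : (⋃ k ∈ Finset.range (m + 1), T^[k] '' G) = Set.univ)
    (rt : α → ℕ)
    (hrt : ∀ x ∈ G, 1 ≤ rt x ∧ T^[rt x] x ∈ G ∧
        ∀ k, 0 < k → k < rt x → T^[k] x ∉ G)
    (huniq : ∀ μ : Measure α, IsProbabilityMeasure μ → μ Gᶜ = 0 →
        μ.map (fun x => T^[rt x] x) = μ → μ = (ν G)⁻¹ • ν.restrict G) :
    ∀ μ : Measure α, IsProbabilityMeasure μ → μ.map T = μ → μ = ν := by
  intro μ hμprob hμinv
  have hhits := UEAux.hits T G m hcover rt hrt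
  have htot : ∀ x, ∃ n, 0 < n ∧ T^[n] x ∈ G := by
    intro x
    obtain ⟨j, hj⟩ := hhits (T x)
    exact ⟨j + 1, Nat.succ_pos j, by rwa [Function.iterate_succ_apply]⟩
  have keyμ : ∀ {A : Set α}, MeasurableSet A →
      μ A = ∑' k, μ (G ∩ T ⁻¹' (Cset T G k) ∩ (T^[k]) ⁻¹' A) :=
    fun hA => key_sum hT hG μ hμinv hhits hA
  have keyν : ∀ {A : Set α}, MeasurableSet A →
      ν A = ∑' k, ν (G ∩ T ⁻¹' (Cset T G k) ∩ (T^[k]) ⁻¹' A) :=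
    fun hA => key_sum hT hG ν hinv hhits hA
  have hμG_ne : μ G ≠ 0 := by
    intro hz
    have h1 : (1 : ℝ≥0∞) = ∑' k, μ (G ∩ T ⁻¹' (Cset T G k) ∩ (T^[k]) ⁻¹' Set.univ) := by
      have := keyμ MeasurableSet.univ
      simpa using this
    have h0 : ∀ k, μ (G ∩ T ⁻¹' (Cset T G k) ∩ (T^[k]) ⁻¹' Set.univ) = 0 :=
      fun k => measure_mono_null (fun x hx => hx.1.1) hz
    rw [tsum_congr h0, tsum_zero] at h1
    exact one_ne_zero h1
  have hμG_top : μ G ≠ ⊤ := measure_ne_top μ G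
  set μ' : Measure α := (μ G)⁻¹ • μ.restrict G with hμ'def
  have hμ'prob : IsProbabilityMeasure μ' := by
    constructor
    rw [hμ'def, Measure.smul_apply, Measure.restrict_apply MeasurableSet.univ,
      Set.univ_inter, smul_eq_mul, ENNReal.inv_mul_cancel hμG_ne hμG_top]
  have hcomp : μ' Gᶜ = 0 := by
    rw [hμ'def, Measure.smul_apply, Measure.restrict_apply hG.compl]
    simp
  have hg := measurable_gmap hT hG htot
  have hret : (fun x => T^[rt x] x) =ᵐ[μ'] gmap T G htot := by
    rw [Filter.EventuallyEq, ae_iff]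
    refine measure_mono_null ?_ hcomp
    intro x hx hxG
    exact hx ((gmap_eq_rt htot rt hrt hxG).symm)
  have hmapμ' : μ'.map (fun x => T^[rt x] x) = μ' := by
    rw [Measure.map_congr hret, hμ'def, Measure.map_smul]
    congr 1
    ext A hA
    rw [Measure.map_apply hg hA, Measure.restrict_apply (hg hA), Measure.restrict_apply hA]
    exact gmap_measure_eq hT hG htot μ hμinv hhits hA
  have huniq' := huniq μ' hμ'prob hcomp hmapμ'
  have hrestrict : μ.restrict G = (μ G * (ν G)⁻¹) • ν.restrict G := by
    calc μ.restrict G = (μ G) • ((μ G)⁻¹ • μ.restrict G) := by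
          rw [smul_smul, ENNReal.mul_inv_cancel hμG_ne hμG_top, one_smul]
      _ = (μ G) • ((ν G)⁻¹ • ν.restrict G) := by rw [← hμ'def, huniq']
      _ = (μ G * (ν G)⁻¹) • ν.restrict G := by rw [smul_smul]
  set c : ℝ≥0∞ := μ G * (ν G)⁻¹ with hc_def
  have hterm : ∀ (A : Set α), MeasurableSet A → ∀ k : ℕ,
      μ (G ∩ T ⁻¹' (Cset T G k) ∩ (T^[k]) ⁻¹' A)
        = c * ν (G ∩ T ⁻¹' (Cset T G k) ∩ (T^[k]) ⁻¹' A) := by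
    intro A hA k
    set S := G ∩ T ⁻¹' (Cset T G k) ∩ (T^[k]) ⁻¹' A with hSdef
    have hmeas : MeasurableSet S :=
      (hG.inter (hT (measurableSet_Cset hT hG k))).inter ((hT.iterate k) hA)
    have hsub : S ⊆ G := fun x hx => hx.1.1
    calc μ S = μ.restrict G S := by
          rw [Measure.restrict_apply hmeas, Set.inter_eq_self_of_subset_left hsub]
      _ = c * ν.restrict G S := by rw [hrestrict, Measure.smul_apply, smul_eq_mul]
      _ = c * ν S := by
          rw [Measure.restrict_apply hmeas, Set.inter_eq_self_of_subset_left hsub]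
  have hmain : ∀ A : Set α, MeasurableSet A → μ A = c * ν A := by
    intro A hA
    calc μ A = ∑' k, μ (G ∩ T ⁻¹' (Cset T G k) ∩ (T^[k]) ⁻¹' A) := keyμ hA
      _ = ∑' k, c * ν (G ∩ T ⁻¹' (Cset T G k) ∩ (T^[k]) ⁻¹' A) :=
          tsum_congr fun k => hterm A hA k
      _ = c * ∑' k, ν (G ∩ T ⁻¹' (Cset T G k) ∩ (T^[k]) ⁻¹' A) := ENNReal.tsum_mul_left
      _ = c * ν A := by rw [← keyν hA]
  have hc1 : c = 1 := by
    have h := hmain Set.univ MeasurableSet.univ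
    simpa [measure_univ] using h.symm
  ext A hA
  rw [hmain A hA, hc1, one_mul]
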